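/- Let A ∈ ℝ^{n×n} be nilpotent with A^p = 0, let B ∈ ℝ^{n×c₋}, let X₋ ∈ ℝ^{c₋×c₋} be symmetric positive definite, let ε > 0 and H ∈ ℝ^{n×n}. Define T = Σ_{k=0}^{p−1} A^k (B X₋⁻¹ Bᵀ + Hᵀ H + ε I)(Aᵀ)^k. Then T is positive definite, and with P = T⁻¹ the matrix F = [[P − Aᵀ P A, −Aᵀ P B], [−Bᵀ P A, X₋ − Bᵀ P B]] is positive definite. -/

import Mathlib

open Matrix Finset

private lemma posDef_quad {m : Type*} [Fintype m] {M : Matrix m m ℝ} (hM : M.PosDef)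
    {x : m → ℝ} (hx : x ≠ 0) : 0 < x ⬝ᵥ (M *ᵥ x) := by
  simpa using hM.dotProduct_mulVec_pos hx

private lemma posSemidef_quad {m : Type*} [Fintype m] {M : Matrix m m ℝ} (hM : M.PosSemidef)
    (x : m → ℝ) : 0 ≤ x ⬝ᵥ (M *ᵥ x) := by
  simpa using hM.dotProduct_mulVec_nonneg x

private lemma herm_transpose {m : Type*} {M : Matrix m m ℝ} (hM : M.IsHermitian) : Mᵀ = M := by
  rw [← conjTranspose_eq_transpose_of_trivial]; exact hM

private lemma dvt {a b : Type*} [Fintype a] [Fintype b] (M : Matrix a b ℝ) (x : b → ℝ)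
    (w : a → ℝ) : x ⬝ᵥ (Mᵀ *ᵥ w) = (M *ᵥ x) ⬝ᵥ w := by
  rw [dotProduct_mulVec, vecMul_transpose]

private lemma dvt' {a b : Type*} [Fintype a] [Fintype b] (M : Matrix a b ℝ) (x : a → ℝ)
    (w : b → ℝ) : x ⬝ᵥ (M *ᵥ w) = (Mᵀ *ᵥ x) ⬝ᵥ w := by
  conv_lhs => rw [← transpose_transpose M]
  rw [dvt]

private lemma self_dot_pos {m : Type*} [Fintype m] {y : m → ℝ} (hy : y ≠ 0) :
    0 < y ⬝ᵥ y := by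
  have hnn : 0 ≤ y ⬝ᵥ y := by simpa using dotProduct_star_self_nonneg y
  rcases lt_or_eq_of_le hnn with h | h
  · exact h
  · exact absurd (dotProduct_self_eq_zero.mp h.symm) hy

private lemma key_ineq {m : Type*} [Fintype m] [DecidableEq m]
    {S : Matrix m m ℝ} (hS : S.PosDef) (z w : m → ℝ) :
    2 * (z ⬝ᵥ w) ≤ z ⬝ᵥ (S *ᵥ z) + w ⬝ᵥ (S⁻¹ *ᵥ w) := by
  have hdet : IsUnit S.det := isUnit_iff_ne_zero.mpr hS.det_pos.ne'
  have h0 : 0 ≤ (S *ᵥ z - w) ⬝ᵥ (S⁻¹ *ᵥ (S *ᵥ z - w)) := posSemidef_quad hS.inv.posSemidef _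
  have hSym : Sᵀ = S := herm_transpose hS.isHermitian
  have e1 : S⁻¹ *ᵥ (S *ᵥ z - w) = z - S⁻¹ *ᵥ w := by
    rw [mulVec_sub, mulVec_mulVec, nonsing_inv_mul _ hdet, one_mulVec]
  have e2 : (S *ᵥ z) ⬝ᵥ (S⁻¹ *ᵥ w) = z ⬝ᵥ w := by
    rw [dotProduct_comm, dvt' S, hSym, mulVec_mulVec, mul_nonsing_inv _ hdet, one_mulVec,
      dotProduct_comm]
  have e3 : (S *ᵥ z) ⬝ᵥ z = z ⬝ᵥ (S *ᵥ z) := dotProduct_comm _ _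
  have e4 : w ⬝ᵥ z = z ⬝ᵥ w := dotProduct_comm _ _
  rw [e1, sub_dotProduct, dotProduct_sub, dotProduct_sub, e2, e3, e4] at h0
  linarith

/-- The Gramian-type parameterization
`T = Σ_{k<p} A^k (B X₋⁻¹ Bᵀ + Hᵀ H + ε I)(Aᵀ)^k` for nilpotent `A` is positive
definite and, with `P = T⁻¹`, renders the state-input dissipativity block
`F = [[P − Aᵀ P A, −Aᵀ P B], [−Bᵀ P A, X₋ − Bᵀ P B]]` positive definite. -/
theorem gramian_parameterization_renders_F_posdef
    (n cm p : ℕ) (A : Matrix (Fin n) (Fin n) ℝ) (hA : A ^ p = 0)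
    (B : Matrix (Fin n) (Fin cm) ℝ)
    (Xm : Matrix (Fin cm) (Fin cm) ℝ) (hXm : Xm.PosDef)
    (ε : ℝ) (hε : 0 < ε) (H : Matrix (Fin n) (Fin n) ℝ)
    (T : Matrix (Fin n) (Fin n) ℝ)
    (hT : T = ∑ k ∈ Finset.range p,
      A ^ k * (B * Xm⁻¹ * Bᵀ + Hᵀ * H + ε • (1 : Matrix (Fin n) (Fin n) ℝ)) * Aᵀ ^ k)
    (P : Matrix (Fin n) (Fin n) ℝ) (hP : P = T⁻¹) :
    T.PosDef ∧
    (Matrix.fromBlocks (P - Aᵀ * P * A) (-(Aᵀ * P * B))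
      (-(Bᵀ * P * A)) (Xm - Bᵀ * P * B)).PosDef := by
  have hXmdet : IsUnit Xm.det := isUnit_iff_ne_zero.mpr hXm.det_pos.ne'
  rcases Nat.eq_zero_or_pos n with hn | hn
  · -- degenerate case : n = 0
    subst hn
    have hBPB : Bᵀ * P * B = (0 : Matrix (Fin cm) (Fin cm) ℝ) := by
      ext i j; simp [Matrix.mul_apply]
    constructor
    · exact ⟨Subsingleton.elim _ _, fun x hx => absurd (Subsingleton.elim x 0) hx⟩
    rw [posDef_iff_dotProduct_mulVec]
    constructor
    · show _ᴴ = _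
      have hb1 : (P - Aᵀ * P * A)ᴴ = P - Aᵀ * P * A := Subsingleton.elim _ _
      have hb2 : (-(Bᵀ * P * A))ᴴ = -(Aᵀ * P * B) := Subsingleton.elim _ _
      have hb3 : (-(Aᵀ * P * B))ᴴ = -(Bᵀ * P * A) := Subsingleton.elim _ _
      have hb4 : (Xm - Bᵀ * P * B)ᴴ = Xm - Bᵀ * P * B := by
        rw [hBPB, sub_zero]; exact hXm.isHermitian
      rw [fromBlocks_conjTranspose, hb1, hb2, hb3, hb4]
    · rintro zv hzv
      have hst : star zv = zv := by simp
      rw [hst]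
      have hx0 : zv ∘ Sum.inl = 0 := Subsingleton.elim _ _
      have hu : zv ∘ Sum.inr ≠ 0 := by
        intro h
        apply hzv
        rw [← Sum.elim_comp_inl_inr zv, hx0, h]
        ext (i | i)
        · exact i.elim0
        · simp
      have hzv' : zv = Sum.elim (0 : Fin 0 → ℝ) (zv ∘ Sum.inr) := by
        ext (i | i)
        · exact i.elim0
        · rfl
      rw [hzv', fromBlocks_mulVec, sumElim_dotProduct_sumElim, hBPB, sub_zero]
      simp only [zero_dotProduct, mulVec_zero, zero_add, Sum.elim_comp_inl, Sum.elim_comp_inr]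
      exact posDef_quad hXm hu
  · -- main case : n > 0, hence p > 0
    have hp : p ≠ 0 := by
      rintro rfl
      rw [pow_zero] at hA
      have := congrFun (congrFun hA ⟨0, hn⟩) ⟨0, hn⟩
      simp [Matrix.one_apply] at this
    obtain ⟨p', rfl⟩ : ∃ p', p = p' + 1 := ⟨p - 1, (Nat.succ_pred_eq_of_ne_zero hp).symm⟩
    set Q : Matrix (Fin n) (Fin n) ℝ :=
      B * Xm⁻¹ * Bᵀ + Hᵀ * H + ε • (1 : Matrix (Fin n) (Fin n) ℝ) with hQdef
    have hQpos : Q.PosDef := by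
      have h1 : (B * Xm⁻¹ * Bᵀ).PosSemidef := by
        have := hXm.inv.posSemidef.mul_mul_conjTranspose_same B
        rwa [conjTranspose_eq_transpose_of_trivial] at this
      have h2 : (Hᵀ * H).PosSemidef := by
        have := posSemidef_conjTranspose_mul_self H
        rwa [conjTranspose_eq_transpose_of_trivial] at this
      have h3 : (ε • (1 : Matrix (Fin n) (Fin n) ℝ)).PosDef := by
        rw [smul_one_eq_diagonal]
        exact .diagonal fun _ => hε
      exact Matrix.PosDef.posSemidef_add (h1.add h2) h3
    have hTerm : ∀ k, (A ^ k * Q * Aᵀ ^ k).PosSemidef := fun k => by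
      have := hQpos.posSemidef.mul_mul_conjTranspose_same (A ^ k)
      rwa [conjTranspose_eq_transpose_of_trivial, transpose_pow] at this
    have hsum : ∀ s : Finset ℕ, (∑ k ∈ s, A ^ (k + 1) * Q * Aᵀ ^ (k + 1)).PosSemidef :=
      fun s => Finset.sum_induction _ _ (fun a b ha hb => ha.add hb) .zero
        (fun i _ => hTerm (i + 1))
    have e0 : A ^ 0 * Q * Aᵀ ^ 0 = Q := by simp
    have hTpos : T.PosDef := by
      rw [hT, Finset.sum_range_succ', e0]
      exact Matrix.PosDef.posSemidef_add (hsum _) hQpos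
    refine ⟨hTpos, ?_⟩
    have hTdet : IsUnit T.det := isUnit_iff_ne_zero.mpr hTpos.det_pos.ne'
    have hPpos : P.PosDef := hP ▸ hTpos.inv
    have hPsym : Pᵀ = P := herm_transpose hPpos.isHermitian
    have hXsym : Xmᵀ = Xm := herm_transpose hXm.isHermitian
    -- telescoping identity
    have step : ∀ k, A * (A ^ k * Q * Aᵀ ^ k) * Aᵀ = A ^ (k + 1) * Q * Aᵀ ^ (k + 1) := by
      intro k
      rw [pow_succ' A, pow_succ Aᵀ]
      noncomm_ring
    have hTele : A * T * Aᵀ + Q = T := by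
      have hsr : (∑ k ∈ Finset.range (p' + 1), A ^ (k + 1) * Q * Aᵀ ^ (k + 1))
          + Q = ∑ k ∈ Finset.range (p' + 1 + 1), A ^ k * Q * Aᵀ ^ k := by
        rw [Finset.sum_range_succ' (fun k => A ^ k * Q * Aᵀ ^ k) (p' + 1)]
        simp [e0]
      conv_lhs => rw [hT]
      rw [Finset.mul_sum, Finset.sum_mul]
      simp_rw [step]
      rw [hsr, Finset.sum_range_succ, hA, ← hT]
      simp
    rw [posDef_iff_dotProduct_mulVec]
    constructor
    · show _ᴴ = _
      rw [fromBlocks_conjTranspose]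
      simp only [conjTranspose_eq_transpose_of_trivial, transpose_sub, transpose_neg,
        transpose_mul, transpose_transpose, hPsym, hXsym, Matrix.mul_assoc]
    · rintro zv hzv
      have hst : star zv = zv := by simp
      rw [hst]
      set x : Fin n → ℝ := zv ∘ Sum.inl with hxdef
      set u : Fin cm → ℝ := zv ∘ Sum.inr with hudef
      have hzv' : zv = Sum.elim x u := (Sum.elim_comp_inl_inr zv).symm
      set v : Fin n → ℝ := A *ᵥ x + B *ᵥ u with hvdef
      set y : Fin n → ℝ := P *ᵥ v with hydef
      have hform : zv ⬝ᵥ ((Matrix.fromBlocks (P - Aᵀ * P * A) (-(Aᵀ * P * B))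
          (-(Bᵀ * P * A)) (Xm - Bᵀ * P * B)) *ᵥ zv)
          = x ⬝ᵥ (P *ᵥ x) + u ⬝ᵥ (Xm *ᵥ u) - v ⬝ᵥ (P *ᵥ v) := by
        conv_lhs => rw [hzv']
        rw [fromBlocks_mulVec, sumElim_dotProduct_sumElim, hvdef]
        simp only [sub_mulVec, neg_mulVec, dotProduct_sub, dotProduct_neg, mulVec_add,
          dotProduct_add, add_dotProduct, ← mulVec_mulVec, Sum.elim_comp_inl, Sum.elim_comp_inr,
          dvt]
        ring
      rw [hform]
      -- key facts
      have hTy : T *ᵥ y = v := by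
        rw [hydef, hP, mulVec_mulVec, mul_nonsing_inv _ hTdet, one_mulVec]
      have hvPv : v ⬝ᵥ (P *ᵥ v) = y ⬝ᵥ (A *ᵥ x) + y ⬝ᵥ (B *ᵥ u) := by
        rw [← hydef, dotProduct_comm]
        conv_lhs => rw [hvdef]
        rw [dotProduct_add]
      have hyTy : y ⬝ᵥ (T *ᵥ y) = y ⬝ᵥ (A *ᵥ x) + y ⬝ᵥ (B *ᵥ u) := by
        rw [hTy]
        conv_lhs => rw [hvdef]
        rw [dotProduct_add]
      have hsplit : y ⬝ᵥ (T *ᵥ y) = y ⬝ᵥ ((A * T * Aᵀ) *ᵥ y) + y ⬝ᵥ ((B * Xm⁻¹ * Bᵀ) *ᵥ y)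
          + y ⬝ᵥ ((Hᵀ * H) *ᵥ y) + ε * (y ⬝ᵥ y) := by
        conv_lhs => rw [← hTele]
        rw [hQdef]
        simp only [add_mulVec, dotProduct_add, smul_mulVec, one_mulVec, dotProduct_smul,
          smul_eq_mul]
        ring
      have key1 := key_ineq hTpos (Aᵀ *ᵥ y) x
      have key2 := key_ineq hXm.inv (Bᵀ *ᵥ y) u
      rw [nonsing_inv_nonsing_inv _ hXmdet] at key2
      have h1 : (Aᵀ *ᵥ y) ⬝ᵥ x = y ⬝ᵥ (A *ᵥ x) := by
        rw [dotProduct_comm, dvt, dotProduct_comm]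
      have h2 : (Aᵀ *ᵥ y) ⬝ᵥ (T *ᵥ (Aᵀ *ᵥ y)) = y ⬝ᵥ ((A * T * Aᵀ) *ᵥ y) := by
        rw [← mulVec_mulVec, ← mulVec_mulVec, dvt' A]
      have h3 : (Bᵀ *ᵥ y) ⬝ᵥ u = y ⬝ᵥ (B *ᵥ u) := by
        rw [dotProduct_comm, dvt, dotProduct_comm]
      have h4 : (Bᵀ *ᵥ y) ⬝ᵥ (Xm⁻¹ *ᵥ (Bᵀ *ᵥ y)) = y ⬝ᵥ ((B * Xm⁻¹ * Bᵀ) *ᵥ y) := by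
        rw [← mulVec_mulVec, ← mulVec_mulVec, dvt' B]
      rw [h1, h2, ← hP] at key1
      rw [h3, h4] at key2
      have hHy : 0 ≤ y ⬝ᵥ ((Hᵀ * H) *ᵥ y) := by
        rw [← mulVec_mulVec, dvt]
        simpa using dotProduct_star_self_nonneg (H *ᵥ y)
      have hxP : 0 ≤ x ⬝ᵥ (P *ᵥ x) := posSemidef_quad hPpos.posSemidef x
      have huX : 0 ≤ u ⬝ᵥ (Xm *ᵥ u) := posSemidef_quad hXm.posSemidef u
      by_cases hy : y = 0
      · have hv0 : v = 0 := by rw [← hTy, hy, mulVec_zero]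
        rw [hv0, mulVec_zero, dotProduct_zero, sub_zero]
        have hxu : x ≠ 0 ∨ u ≠ 0 := by
          by_contra h
          push_neg at h
          apply hzv
          rw [hzv', h.1, h.2]
          ext (i | i) <;> simp
        rcases hxu with hx | hu
        · have := posDef_quad hPpos hx
          linarith
        · have := posDef_quad hXm hu
          linarith
      · have hyy : 0 < y ⬝ᵥ y := self_dot_pos hy
        linarith [hvPv, hyTy, hsplit, key1, key2, hHy, mul_pos hε hyy]
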